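/- Work in R = ℂ[x₀, x₁, x₂, x₃] and let a₀, a₁, a₂, a₃ ∈ ℂ satisfy a₀ + a₁ + a₂ + a₃ = 0. Define the antisymmetric matrix π with π₀₁ = (a₃ − a₂)x₀x₁, π₀₂ = (a₁ − a₃)x₀x₂, π₀₃ = (a₂ − a₁)x₀x₃, π₁₂ = (a₃ − a₀)x₁x₂, π₁₃ = (a₀ − a₂)x₁x₃, π₂₃ = (a₁ − a₀)x₂x₃ (and π j i = −π i j). Then the bracket {f, g} = Σ_{i,j} π i j · ∂ᵢf · ∂ⱼg satisfies the Jacobi identity, and π is unimodular: Σ_j ∂ⱼ(π i j) = 0 for every i. -/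
import Mathlib


open MvPolynomial

noncomputable section

lemma pd_comm (i j : Fin 4) (p : MvPolynomial (Fin 4) ℂ) :
    pderiv i (pderiv j p) = pderiv j (pderiv i p) := by
  induction p using MvPolynomial.induction_on with
  | C a => simp
  | add p q hp hq => simp [hp, hq]
  | mul_X p k hp =>
      simp only [pderiv_mul, map_add, pderiv_X, hp]
      simp [Pi.single_apply, apply_ite (pderiv i), apply_ite (pderiv j)]
      exact add_right_comm _ _ _

/-- The bracket `{f,g} = Σ_{i,j} π i j · ∂ᵢf · ∂ⱼg` determined by a matrix of polynomials. -/
def brkt (π : Fin 4 → Fin 4 → MvPolynomial (Fin 4) ℂ)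
    (f g : MvPolynomial (Fin 4) ℂ) : MvPolynomial (Fin 4) ℂ :=
  ∑ i : Fin 4, ∑ j : Fin 4, π i j * pderiv i f * pderiv j g

set_option maxHeartbeats 4000000 in
/-- The normal form of the Poisson structures in the component `L(1,1,1,1)` satisfies the
Jacobi identity and is unimodular. -/
theorem stmt_10 (a₀ a₁ a₂ a₃ : ℂ) (ha : a₀ + a₁ + a₂ + a₃ = 0)
    (π : Fin 4 → Fin 4 → MvPolynomial (Fin 4) ℂ)
    (hskew : ∀ i j, π j i = - π i j)
    (h01 : π 0 1 = C (a₃ - a₂) * (X 0 * X 1))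
    (h02 : π 0 2 = C (a₁ - a₃) * (X 0 * X 2))
    (h03 : π 0 3 = C (a₂ - a₁) * (X 0 * X 3))
    (h12 : π 1 2 = C (a₃ - a₀) * (X 1 * X 2))
    (h13 : π 1 3 = C (a₀ - a₂) * (X 1 * X 3))
    (h23 : π 2 3 = C (a₁ - a₀) * (X 2 * X 3)) :
    (∀ f g h : MvPolynomial (Fin 4) ℂ,
      brkt π f (brkt π g h) + brkt π g (brkt π h f) + brkt π h (brkt π f g) = 0) ∧
    (∀ i : Fin 4, ∑ j : Fin 4, pderiv j (π i j) = 0) := by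
  have hd : ∀ i, π i i = 0 := fun i =>
    add_self_eq_zero.mp (by linear_combination hskew i i)
  constructor
  · intro f g h
    simp only [brkt, Fin.sum_univ_four, hd 0, hd 1, hd 2, hd 3,
      hskew 0 1, hskew 0 2, hskew 0 3, hskew 1 2, hskew 1 3, hskew 2 3,
      h01, h02, h03, h12, h13, h23]
    simp only [map_add, map_neg, map_mul, map_zero, pderiv_mul, pderiv_C, pderiv_X,
      Pi.single_apply, zero_mul, mul_zero, neg_zero, add_zero, zero_add, neg_neg,
      Fin.isValue, show ((0:Fin 4) = 1) = False by simp, show ((0:Fin 4) = 2) = False by simp,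
      show ((0:Fin 4) = 3) = False by simp, show ((1:Fin 4) = 0) = False by simp,
      show ((1:Fin 4) = 2) = False by simp, show ((1:Fin 4) = 3) = False by simp,
      show ((2:Fin 4) = 0) = False by simp, show ((2:Fin 4) = 1) = False by simp,
      show ((2:Fin 4) = 3) = False by simp, show ((3:Fin 4) = 0) = False by simp,
      show ((3:Fin 4) = 1) = False by simp, show ((3:Fin 4) = 2) = False by simp,
      if_true, if_false, ite_true, ite_false, eq_self_iff_true, one_mul, mul_one]
    simp only [pd_comm 1 0, pd_comm 2 0, pd_comm 3 0, pd_comm 2 1, pd_comm 3 1, pd_comm 3 2]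
    ring
  · have key : ∀ i : Fin 4, i = 0 ∨ i = 1 ∨ i = 2 ∨ i = 3 := by decide
    intro i
    rcases key i with rfl | rfl | rfl | rfl <;>
      rw [Fin.sum_univ_four] <;>
      simp only [hd 0, hd 1, hd 2, hd 3,
        hskew 0 1, hskew 0 2, hskew 0 3, hskew 1 2, hskew 1 3, hskew 2 3,
        h01, h02, h03, h12, h13, h23, map_neg, map_zero, pderiv_mul, pderiv_C,
        pderiv_X, Pi.single_apply] <;>
      simp <;> ring

end
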